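/- Keller–Osserman plus convexity implies superlinearity: if g is convex, positive on [a,∞), and ∫_a^∞ ds/√(G(s)) < ∞ with G(s) = ∫_a^s g, then g(s)/s → ∞ as s → ∞; in particular g is increasing on some half-line [b,∞). -/

import Mathlib

open Set Filter MeasureTheory intervalIntegral

theorem stmt14 (a : ℝ) (g : ℝ → ℝ)
    (hconv : ConvexOn ℝ (Set.Ici a) g)
    (hpos : ∀ s ≥ a, 0 < g s)
    (G : ℝ → ℝ) (hGdef : G = fun s => ∫ t in a..s, g t)
    (hKO : MeasureTheory.IntegrableOn (fun s => 1 / Real.sqrt (G s)) (Set.Ici (a + 1))) :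
    Filter.Tendsto (fun s => g s / s) Filter.atTop Filter.atTop ∧
    ∃ b ≥ a, StrictMonoOn g (Set.Ici b) := by
  subst hGdef
  -- continuity of g on the interior
  have hgcont : ContinuousOn g (Set.Ioi a) :=
    (hconv.subset Set.Ioi_subset_Ici_self (convex_Ioi a)).continuousOn isOpen_Ioi
  -- interval integrability of g
  have hgint : ∀ s, a ≤ s → IntervalIntegrable g MeasureTheory.volume a s := by
    intro s hs
    rcases eq_or_lt_of_le hs with rfl | hs
    · simp
    rw [intervalIntegrable_iff_integrableOn_Ioc_of_le hs.le]
    have hIoo : IntegrableOn g (Set.Ioo a s) := by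
      refine ⟨(hgcont.mono Set.Ioo_subset_Ioi_self).aestronglyMeasurable measurableSet_Ioo,
        MeasureTheory.HasFiniteIntegral.restrict_of_bounded (C := max (g a) (g s))
          measure_Ioo_lt_top ?_⟩
      refine (ae_restrict_iff' measurableSet_Ioo).2 (ae_of_all _ fun t ht => ?_)
      rw [Real.norm_eq_abs, abs_of_pos (hpos t ht.1.le)]
      refine hconv.le_on_segment (Set.self_mem_Ici) (Set.mem_Ici.2 hs.le) ?_
      rw [segment_eq_Icc hs.le]
      exact ⟨ht.1.le, ht.2.le⟩
    exact hIoo.congr_set_ae (MeasureTheory.Ioo_ae_eq_Ioc (μ := MeasureTheory.volume)).symm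
  -- positivity of G
  have hGpos : ∀ s, a < s → 0 < ∫ t in a..s, g t := fun s hs =>
    intervalIntegral_pos_of_pos_on (hgint s hs.le) (fun t ht => hpos t ht.1.le) hs
  -- unbounded slopes
  have key : ∀ M : ℝ, ∃ x y, a ≤ x ∧ x < y ∧ M < (g y - g x) / (y - x) := by
    by_contra hcon
    push_neg at hcon
    obtain ⟨M, hM⟩ := hcon
    set M' : ℝ := max M 0 with hM'def
    have hM'0 : 0 ≤ M' := le_max_right _ _
    -- linear upper bound for g
    have hlin : ∀ s, a ≤ s → g s ≤ g a + M' * (s - a) := by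
      intro s hs
      rcases eq_or_lt_of_le hs with rfl | hs
      · simp
      have h1 : (g s - g a) / (s - a) ≤ M' := (hM a s le_rfl hs).trans (le_max_left _ _)
      rw [div_le_iff₀ (by linarith)] at h1
      linarith
    -- quadratic upper bound for G
    set b₀ : ℝ := max (a + 1) 1 with hb₀def
    have hb₀1 : (1:ℝ) ≤ b₀ := le_max_right _ _
    have hb₀a : a + 1 ≤ b₀ := le_max_left _ _
    set C : ℝ := (g a + M' * (1 + |a|)) * (1 + |a|) with hCdef
    have hC : 0 < C := by
      have := hpos a le_rfl
      have := abs_nonneg a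
      positivity
    have hGle : ∀ s, b₀ ≤ s → (∫ t in a..s, g t) ≤ C * s ^ 2 := by
      intro s hs
      have hs1 : (1:ℝ) ≤ s := hb₀1.trans hs
      have hsa : a ≤ s := by linarith [hb₀a.trans hs]
      have hbound : ∀ t ∈ Set.Icc a s, g t ≤ g a + M' * (s - a) := by
        intro t ht
        have := hlin t ht.1
        nlinarith [ht.2, hM'0]
      have h1 : (∫ t in a..s, g t) ≤ ∫ _ in a..s, (g a + M' * (s - a)) :=
        intervalIntegral.integral_mono_on hsa (hgint s hsa) intervalIntegrable_const hbound
      rw [intervalIntegral.integral_const, smul_eq_mul] at h1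
      have hsa2 : s - a ≤ s * (1 + |a|) := by
        have : -a ≤ |a| := neg_le_abs a
        nlinarith [abs_nonneg a]
      have hga : 0 < g a := hpos a le_rfl
      calc (∫ t in a..s, g t) ≤ (s - a) * (g a + M' * (s - a)) := h1
        _ ≤ (s * (1 + |a|)) * (g a + M' * (s * (1 + |a|))) := by
            refine mul_le_mul hsa2 ?_ ?_ ?_
            · exact add_le_add_right (mul_le_mul_of_nonneg_left hsa2 hM'0) _
            · nlinarith [mul_nonneg hM'0 (sub_nonneg.2 hsa)]
            · positivity
        _ ≤ C * s ^ 2 := by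
            rw [hCdef]
            nlinarith [mul_nonneg (mul_nonneg (mul_nonneg hga.le
              (by positivity : (0:ℝ) ≤ 1 + |a|)) (by linarith : (0:ℝ) ≤ s))
              (by linarith : (0:ℝ) ≤ s - 1), abs_nonneg a, hM'0]
    -- the comparison function 1/(√C * s)
    have hsqrtC : 0 < Real.sqrt C := Real.sqrt_pos.2 hC
    have hcomp : ∀ s ∈ Set.Ici b₀, (Real.sqrt C)⁻¹ * s⁻¹ ≤ 1 / Real.sqrt (∫ t in a..s, g t) := by
      intro s hs
      have hs1 : (1:ℝ) ≤ s := hb₀1.trans hs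
      have hsa : a < s := by linarith [hb₀a.trans hs]
      have hG0 : 0 < ∫ t in a..s, g t := hGpos s hsa
      have hle : Real.sqrt (∫ t in a..s, g t) ≤ Real.sqrt C * s := by
        have := Real.sqrt_le_sqrt (hGle s hs)
        calc Real.sqrt (∫ t in a..s, g t) ≤ Real.sqrt (C * s ^ 2) := this
          _ = Real.sqrt C * s := by
              rw [Real.sqrt_mul hC.le, Real.sqrt_sq (by linarith)]
      have h0 : 0 < Real.sqrt (∫ t in a..s, g t) := Real.sqrt_pos.2 hG0
      have := one_div_le_one_div_of_le h0 hle
      calc (Real.sqrt C)⁻¹ * s⁻¹ = 1 / (Real.sqrt C * s) := by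
            rw [one_div, mul_inv]
        _ ≤ 1 / Real.sqrt (∫ t in a..s, g t) := this
    -- transfer integrability
    have hKO' : IntegrableOn (fun s => 1 / Real.sqrt (∫ t in a..s, g t)) (Set.Ici b₀) :=
      hKO.mono_set (Set.Ici_subset_Ici.2 hb₀a)
    have hmeas : AEStronglyMeasurable (fun s : ℝ => (Real.sqrt C)⁻¹ * s⁻¹)
        (MeasureTheory.volume.restrict (Set.Ici b₀)) := by
      refine ContinuousOn.aestronglyMeasurable ?_ measurableSet_Ici
      exact continuousOn_const.mul (continuousOn_inv₀.mono (fun x hx => by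
        simp only [Set.mem_compl_iff, Set.mem_singleton_iff]
        intro h; rw [h] at hx; exact absurd (hb₀1.trans hx) (by norm_num)))
    have hint : IntegrableOn (fun s : ℝ => (Real.sqrt C)⁻¹ * s⁻¹) (Set.Ici b₀) := by
      refine MeasureTheory.Integrable.mono hKO' hmeas ?_
      refine (ae_restrict_iff' measurableSet_Ici).2 (ae_of_all _ fun s hs => ?_)
      have h1 : 0 ≤ (Real.sqrt C)⁻¹ * s⁻¹ := by
        have hs0 : (0:ℝ) < s := lt_of_lt_of_le one_pos (hb₀1.trans hs)
        positivity
      have h2 : 0 ≤ 1 / Real.sqrt (∫ t in a..s, g t) := by positivity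
      rw [Real.norm_eq_abs, Real.norm_eq_abs, abs_of_nonneg h1, abs_of_nonneg h2]
      exact hcomp s hs
    have hint2 : IntegrableOn (fun s : ℝ => s⁻¹) (Set.Ici b₀) := by
      have h4 : IntegrableOn (fun x : ℝ => Real.sqrt C * ((Real.sqrt C)⁻¹ * x⁻¹))
          (Set.Ici b₀) := hint.const_mul (Real.sqrt C)
      refine h4.congr_fun (fun x _ => ?_) measurableSet_Ici
      dsimp only; rw [← mul_assoc, mul_inv_cancel₀ hsqrtC.ne', one_mul]
    have hint3 : IntegrableOn (fun s : ℝ => s ^ (-1 : ℝ)) (Set.Ioi b₀) := by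
      refine (hint2.mono_set Set.Ioi_subset_Ici_self).congr_fun (fun x hx => ?_) measurableSet_Ioi
      rw [Real.rpow_neg_one]
    rw [integrableOn_Ioi_rpow_iff (by linarith : (0:ℝ) < b₀)] at hint3
    linarith
  -- slope comparison: slopes are monotone
  have flip : ∀ p q : ℝ, (g p - g q) / (p - q) = (g q - g p) / (q - p) := by
    intro p q
    rw [show g q - g p = -(g p - g q) by ring, show q - p = -(p - q) by ring, neg_div_neg_eq]
  have slope_le : ∀ x y u v : ℝ, a ≤ x → x < y → y ≤ u → u < v →
      (g y - g x) / (y - x) ≤ (g v - g u) / (v - u) := by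
    intro x y u v hax hxy hyu huv
    have hay : a ≤ y := hax.trans hxy.le
    have hau : a ≤ u := hay.trans hyu
    have hav : a ≤ v := hau.trans huv.le
    have hxv : x < v := hxy.trans_le (hyu.trans huv.le)
    have h1 : (g y - g x) / (y - x) ≤ (g v - g x) / (v - x) :=
      hconv.secant_mono (Set.mem_Ici.2 hax) (Set.mem_Ici.2 hay) (Set.mem_Ici.2 hav)
        hxy.ne' hxv.ne' (hyu.trans huv.le)
    have h2 : (g x - g v) / (x - v) ≤ (g u - g v) / (u - v) :=
      hconv.secant_mono (Set.mem_Ici.2 hav) (Set.mem_Ici.2 hax) (Set.mem_Ici.2 hau)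
        hxv.ne huv.ne (hxy.le.trans hyu)
    rw [flip x v, flip u v] at h2
    linarith
  constructor
  · rw [Filter.tendsto_atTop]
    intro M
    obtain ⟨x, y, hax, hxy, hM⟩ := key (|M| + 1)
    have hS : ∀ z, y < z → g y + (|M| + 1) * (z - y) ≤ g z := by
      intro z hz
      have h1 := slope_le x y y z hax hxy le_rfl hz
      have h2 : |M| + 1 ≤ (g z - g y) / (z - y) := hM.le.trans h1
      rw [le_div_iff₀ (by linarith)] at h2
      linarith
    have hlim : Tendsto (fun z : ℝ => (|M| + 1) + (g y - (|M| + 1) * y) / z) atTop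
        (nhds ((|M| + 1) + 0)) :=
      tendsto_const_nhds.add (Tendsto.div_atTop tendsto_const_nhds tendsto_id)
    have hev : ∀ᶠ z in atTop, M ≤ (|M| + 1) + (g y - (|M| + 1) * y) / z := by
      refine hlim.eventually_const_le ?_
      rw [add_zero]
      linarith [le_abs_self M]
    filter_upwards [hev, eventually_gt_atTop (max y 0)] with z h1 h2
    have hzy : y < z := lt_of_le_of_lt (le_max_left _ _) h2
    have hz0 : (0:ℝ) < z := lt_of_le_of_lt (le_max_right _ _) h2
    have e : (|M| + 1) + (g y - (|M| + 1) * y) / z = (g y + (|M| + 1) * (z - y)) / z := by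
      field_simp; ring
    rw [e] at h1
    refine h1.trans ?_
    exact div_le_div_of_nonneg_right (hS z hzy) hz0.le
  · obtain ⟨x, y, hax, hxy, hM⟩ := key 0
    refine ⟨y, hax.trans hxy.le, fun u hu v hv huv => ?_⟩
    have h1 := slope_le x y u v hax hxy hu huv
    have h2 : 0 < (g v - g u) / (v - u) := lt_of_lt_of_le hM h1
    have h3 : 0 < v - u := sub_pos.2 huv
    nlinarith [mul_pos h2 h3, div_mul_cancel₀ (g v - g u) h3.ne']
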